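/- Assume the ItI relations g₁ = R^α₁₁ t₁ + R^α₁₃ t₃^α + h₁^α, g₃^α = R^α₃₁ t₁ + R^α₃₃ t₃^α + h₃^α, g₂ = R^β₂₂ t₂ + R^β₂₃ t₃^β + h₂^β, g₃^β = R^β₃₂ t₂ + R^β₃₃ t₃^β + h₃^β, together with the interface coupling t₃^α = −g₃^β and t₃^β = −g₃^α. If W := I − R^β₃₃ R^α₃₃ is invertible, then the incoming interface impedance data on box α is t₃^α = W⁻¹ (R^β₃₃ R^α₃₁ t₁ − R^β₃₂ t₂) + W⁻¹ (R^β₃₃ h₃^α − h₃^β). -/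
import Mathlib


/-- ItI merge: the incoming interface impedance data on box `α`. -/
theorem iti_merge_talpha {n₁ n₂ n₃ : ℕ}
    (Rα₁₁ : Matrix (Fin n₁) (Fin n₁) ℂ) (Rα₁₃ : Matrix (Fin n₁) (Fin n₃) ℂ)
    (Rα₃₁ : Matrix (Fin n₃) (Fin n₁) ℂ) (Rα₃₃ : Matrix (Fin n₃) (Fin n₃) ℂ)
    (Rβ₂₂ : Matrix (Fin n₂) (Fin n₂) ℂ) (Rβ₂₃ : Matrix (Fin n₂) (Fin n₃) ℂ)
    (Rβ₃₂ : Matrix (Fin n₃) (Fin n₂) ℂ) (Rβ₃₃ : Matrix (Fin n₃) (Fin n₃) ℂ)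
    (t₁ g₁ h₁α : Fin n₁ → ℂ) (t₂ g₂ h₂β : Fin n₂ → ℂ)
    (t₃α t₃β g₃α g₃β h₃α h₃β : Fin n₃ → ℂ)
    (hα₁ : g₁ = Rα₁₁.mulVec t₁ + Rα₁₃.mulVec t₃α + h₁α)
    (hα₃ : g₃α = Rα₃₁.mulVec t₁ + Rα₃₃.mulVec t₃α + h₃α)
    (hβ₂ : g₂ = Rβ₂₂.mulVec t₂ + Rβ₂₃.mulVec t₃β + h₂β)
    (hβ₃ : g₃β = Rβ₃₂.mulVec t₂ + Rβ₃₃.mulVec t₃β + h₃β)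
    (hcα : t₃α = -g₃β) (hcβ : t₃β = -g₃α)
    (hW : IsUnit (1 - Rβ₃₃ * Rα₃₃)) :
    t₃α = (1 - Rβ₃₃ * Rα₃₃)⁻¹.mulVec
        ((Rβ₃₃ * Rα₃₁).mulVec t₁ - Rβ₃₂.mulVec t₂) +
      (1 - Rβ₃₃ * Rα₃₃)⁻¹.mulVec (Rβ₃₃.mulVec h₃α - h₃β) := by
  have key : (1 - Rβ₃₃ * Rα₃₃).mulVec t₃α =
      ((Rβ₃₃ * Rα₃₁).mulVec t₁ - Rβ₃₂.mulVec t₂) + (Rβ₃₃.mulVec h₃α - h₃β) := by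
    rw [Matrix.sub_mulVec, Matrix.one_mulVec]
    nth_rewrite 1 [hcα]
    rw [hβ₃, hcβ, hα₃]
    simp only [Matrix.mulVec_add, Matrix.mulVec_neg, ← Matrix.mulVec_mulVec, neg_add_rev]
    abel
  have h1 : (1 - Rβ₃₃ * Rα₃₃)⁻¹ * (1 - Rβ₃₃ * Rα₃₃) = 1 :=
    Matrix.nonsing_inv_mul _ ((Matrix.isUnit_iff_isUnit_det _).mp hW)
  calc t₃α = ((1 - Rβ₃₃ * Rα₃₃)⁻¹ * (1 - Rβ₃₃ * Rα₃₃)).mulVec t₃α := by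
        rw [h1, Matrix.one_mulVec]
    _ = (1 - Rβ₃₃ * Rα₃₃)⁻¹.mulVec ((1 - Rβ₃₃ * Rα₃₃).mulVec t₃α) := by
        rw [← Matrix.mulVec_mulVec]
    _ = _ := by rw [key, Matrix.mulVec_add]
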